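/- Let 𝒯 be a family of complete theories and let (φ_i)_{i ∈ I} be a family of pairwise inconsistent L-sentences (for i ≠ j the set {φ_i, φ_j} is unsatisfiable) such that each 𝒯_{φ_i} is infinite. Then there exists an injective assignment i ↦ T_i of complete theories such that each T_i is an accumulation point of 𝒯 with φ_i ∈ T_i; in particular, 𝒯 has at least |I| accumulation points (so e-Sp(𝒯) ≥ |I|). -/

import Mathlib

open FirstOrder Language Set

universe u v

namespace Approx

variable {L : FirstOrder.Language.{u, v}}

/-- A complete theory: a satisfiable set of sentences deciding every sentence. -/
def CompleteTheory (T : L.Theory) : Prop :=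
  T.IsSatisfiable ∧ ∀ φ : L.Sentence, φ ∈ T ∨ φ.not ∈ T

/-- `T` is `𝒯`-approximated: `T ∉ 𝒯` and every sentence of `T` lies in some member of `𝒯`. -/
def Approximated (𝒯 : Set L.Theory) (T : L.Theory) : Prop :=
  T ∉ 𝒯 ∧ ∀ φ ∈ T, ∃ T' ∈ 𝒯, φ ∈ T'

/-- The `φ`-neighbourhood `𝒯_φ` of a family of theories. -/
def Nbhd (𝒯 : Set L.Theory) (φ : L.Sentence) : Set L.Theory :=
  {T' ∈ 𝒯 | φ ∈ T'}

/-- An accumulation point of `𝒯`: a complete theory each of whose sentences has an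
infinite neighbourhood in `𝒯`. -/
def AccPoint (𝒯 : Set L.Theory) (T : L.Theory) : Prop :=
  CompleteTheory T ∧ ∀ φ ∈ T, (Nbhd 𝒯 φ).Infinite

/-- The `E`-closure of `𝒯`: `𝒯` together with all its accumulation points. -/
def ClE (𝒯 : Set L.Theory) : Set L.Theory :=
  𝒯 ∪ {T | AccPoint 𝒯 T}

/-- if `(φ i)_{i ∈ I}` are pairwise inconsistent sentences with all
neighbourhoods `𝒯_{φ i}` infinite, then there is an injective assignment of accumulation
points `T i` of `𝒯` with `φ i ∈ T i`; in particular `𝒯` has at least `|I|` accumulation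
points. -/
theorem many_accumulation_points
    {L : FirstOrder.Language.{u, v}} [L.IsRelational]
    (𝒯 : Set L.Theory) (h𝒯 : ∀ S ∈ 𝒯, CompleteTheory S)
    {I : Type*} (φ : I → L.Sentence)
    (hdisj : ∀ i j, i ≠ j → ¬ (({φ i, φ j} : L.Theory)).IsSatisfiable)
    (hinf : ∀ i, (Nbhd 𝒯 (φ i)).Infinite) :
    ∃ Tf : I → L.Theory, Function.Injective Tf ∧
      ∀ i, AccPoint 𝒯 (Tf i) ∧ φ i ∈ Tf i := by
  classical
  have inst : ∀ i, Infinite (Nbhd 𝒯 (φ i)) := fun i => (hinf i).to_subtype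
  let U : ∀ i, Ultrafilter (Nbhd 𝒯 (φ i)) := fun i => @Filter.hyperfilter _ (inst i)
  set Tf : I → L.Theory :=
    fun i => {ψ | {S : Nbhd 𝒯 (φ i) | ψ ∈ (S : L.Theory)} ∈ U i} with hTf
  have key : ∀ i, AccPoint 𝒯 (Tf i) ∧ φ i ∈ Tf i := by
    intro i
    have hmemφ : φ i ∈ Tf i := by
      have : {S : Nbhd 𝒯 (φ i) | φ i ∈ (S : L.Theory)} = Set.univ := by
        ext S; simpa using S.2.2
      simp only [hTf, Set.mem_setOf_eq, this]
      exact Filter.univ_mem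
    have hsat : (Tf i).IsSatisfiable := by
      rw [Theory.isSatisfiable_iff_isFinitelySatisfiable]
      intro T0 hT0
      have hbig : {S : Nbhd 𝒯 (φ i) | ∀ ψ ∈ T0, ψ ∈ (S : L.Theory)} ∈ U i := by
        have : {S : Nbhd 𝒯 (φ i) | ∀ ψ ∈ T0, ψ ∈ (S : L.Theory)}
            = ⋂ ψ ∈ (T0 : Set L.Sentence), {S : Nbhd 𝒯 (φ i) | ψ ∈ (S : L.Theory)} := by
          ext S; simp
        rw [this]
        exact (Filter.biInter_mem T0.finite_toSet).2 fun ψ hψ => hT0 hψ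
      obtain ⟨S, hS⟩ := Filter.nonempty_of_mem hbig
      exact Theory.IsSatisfiable.mono ((h𝒯 _ S.2.1).1) (fun ψ hψ => hS ψ hψ)
    have hcomp : ∀ ψ : L.Sentence, ψ ∈ Tf i ∨ ψ.not ∈ Tf i := by
      intro ψ
      by_cases h : {S : Nbhd 𝒯 (φ i) | ψ ∈ (S : L.Theory)} ∈ U i
      · exact Or.inl h
      · right
        rw [← Ultrafilter.compl_mem_iff_notMem] at h
        refine Filter.mem_of_superset h ?_
        intro S hS
        rcases (h𝒯 _ S.2.1).2 ψ with h' | h'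
        · exact absurd h' hS
        · exact h'
    refine ⟨⟨⟨hsat, hcomp⟩, ?_⟩, hmemφ⟩
    · intro ψ hψ
      have hψU : {S : Nbhd 𝒯 (φ i) | ψ ∈ (S : L.Theory)} ∈ U i := hψ
      have hinfA : {S : Nbhd 𝒯 (φ i) | ψ ∈ (S : L.Theory)}.Infinite := by
        by_contra hfin
        rw [Set.not_infinite] at hfin
        exact (@Filter.notMem_hyperfilter_of_finite _ (inst i) _ hfin) hψU
      have : (Subtype.val '' {S : Nbhd 𝒯 (φ i) | ψ ∈ (S : L.Theory)}).Infinite :=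
        hinfA.image (Set.injOn_of_injective Subtype.val_injective)
      refine this.mono ?_
      rintro _ ⟨S, hS, rfl⟩
      exact ⟨S.2.1, hS⟩
  refine ⟨Tf, ?_, key⟩
  intro i j hij
  by_contra hne
  apply hdisj i j hne
  refine Theory.IsSatisfiable.mono (key i).1.1.1 ?_
  intro ψ hψ
  rcases hψ with h | h
  · subst h; exact (key i).2
  · simp only [Set.mem_singleton_iff] at h; subst h
    have := (key j).2
    rwa [← hij] at this
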